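/- For every i ∈ ℕ, every p ∈ [0,1], every n ∈ ℕ, every m ∈ ℤ_n with n − m ≤ 2i, and every sample point ω ∈ Ω, the oriented percolation process and the i-th strengthened process agree at (n,m): _pX^{(∞)}_n(m)(ω) = _pX^{(i)}_n(m)(ω). That is, no site (n,m) with n − m ≤ 2i is ever infected by force, and all such sites have the same infection state in both processes. -/

import Mathlib

open MeasureTheory ProbabilityTheory Filter Set
open scoped ENat ENNReal

noncomputable section

/-- Direction of a bond: `true` = right (`+1`), `false` = left (`-1`). -/
def dir (j : Bool) : ℤ := if j then 1 else -1

/-- An environment: a realization of the family of uniform random variables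
`ξ^j_{n,m}`, indexed by time `n`, space `m` and direction `j`. -/
abbrev Env := ℕ → ℤ → Bool → ℝ

/-- The bond from site `(n,m)` in direction `j` is open at level `p`,
i.e. the Bernoulli variable `_pξ^j_{n,m} = 1_{ξ^j_{n,m} ≤ p}` equals `1`. -/
def bondOpen (p : ℝ) (u : Env) (n : ℕ) (m : ℤ) (j : Bool) : Bool :=
  @decide (u n m j ≤ p) (Classical.propDecidable _)

/-- The position of the right edge after one step from configuration `c` at time `n`:
`sup { m + j : c m = 1, bond (n,m,j) open }`. -/
def nextEdge (p : ℝ) (u : Env) (n : ℕ) (c : ℤ → Bool) : ℤ :=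
  sSup {x : ℤ | ∃ m j, c m = true ∧ bondOpen p u n m j = true ∧ x = m + dir j}

/-- Forced (re)infection indicator for a site lying at (even) distance `d`
behind the new edge, when `d > 2i`; for `i = ∞` there is no forced infection. -/
def forced (i : ℕ∞) (d : ℤ) : Bool :=
  @decide (Even d ∧ 2 * i < (d.toNat : ℕ∞)) (Classical.propDecidable _)

/-- The strengthened discrete-time contact process (SDTCP) of order `i ∈ ℕ ∪ {∞}`,
with infection parameter `p`, environment `u`, and initial configuration `η`. -/
def Xproc (i : ℕ∞) (p : ℝ) (u : Env) (η : ℤ → Bool) : ℕ → ℤ → Bool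
  | 0 => η
  | n + 1 => fun m =>
      (Xproc i p u η n (m - 1) && bondOpen p u n (m - 1) true) ||
      (Xproc i p u η n (m + 1) && bondOpen p u n (m + 1) false) ||
      forced i (nextEdge p u n (Xproc i p u η n) - m)

/-- The right edge process, with the convention `edge 0 = 0`. -/
def edge (i : ℕ∞) (p : ℝ) (u : Env) (η : ℤ → Bool) : ℕ → ℤ
  | 0 => 0
  | n + 1 => nextEdge p u n (Xproc i p u η n)

/-- The standard initial configuration `1_{· ≤ 0}` on the even sites. -/
def η₀ : ℤ → Bool := fun m => @decide (m ≤ 0 ∧ Even m) (Classical.propDecidable _)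

/-- States of the induced Markov chain of order `i`: configurations of the `i`
sites at distances `2, 4, …, 2i` behind the right edge. -/
abbrev IMCState (i : ℕ) := Fin i → Bool

/-- The induced Markov chain: `Y n (j) = X n (edge n − 2(j+1))`. -/
def Yproc (i : ℕ) (p : ℝ) (u : Env) (η : ℤ → Bool) (n : ℕ) : IMCState i :=
  fun j => Xproc (i : ℕ∞) p u η n (edge (i : ℕ∞) p u η n - 2 * ((j : ℤ) + 1))

/-- The initial configuration `η_σ` associated with a state `σ` of the induced
Markov chain: edge at `0`, configuration `σ` at `−2, …, −2i`, everything
infected below `−2i`, everything healthy above `0`. -/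
def ησ (i : ℕ) (σ : IMCState i) : ℤ → Bool := fun m =>
  @decide (Even m ∧ (m = 0 ∨ m < -(2 * (i : ℤ)) ∨
      ∃ j : Fin i, m = -(2 * ((j : ℤ) + 1)) ∧ σ j = true))
    (Classical.propDecidable _)

variable {Ω : Type*}

/-- The probabilistic set-up: `ℙ` is a probability measure and the `ξ^j_{n,m}`
are i.i.d. random variables, uniformly distributed on `[0,1]`. -/
def UniformBonds [MeasureSpace Ω] (ξ : Ω → Env) : Prop :=
  IsProbabilityMeasure (ℙ : Measure Ω) ∧
  (∀ n m j, Measurable fun ω => ξ ω n m j) ∧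
  iIndepFun (m := fun _ : ℕ × ℤ × Bool => (inferInstance : MeasurableSpace ℝ))
    (fun v ω => ξ ω v.1 v.2.1 v.2.2) ℙ ∧
  ∀ n m j, (ℙ : Measure Ω).map (fun ω => ξ ω n m j)
      = (volume : Measure ℝ).restrict (Set.Icc 0 1)

/-- Transition probability `q^{(i)}_{στ}(p)` of the induced Markov chain:
the probability that one step of the chain started from state `σ` leads to `τ`. -/
def kernel [MeasureSpace Ω] (ξ : Ω → Env) (i : ℕ) (p : ℝ) (σ τ : IMCState i) : ℝ :=
  (ℙ {ω | Yproc i p (ξ ω) (ησ i σ) 1 = τ}).toReal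

/-- `π` is a stationary probability distribution for the induced Markov chain. -/
def IsStationaryDist [MeasureSpace Ω] (ξ : Ω → Env) (i : ℕ) (p : ℝ)
    (π : IMCState i → ℝ) : Prop :=
  (∀ σ, 0 ≤ π σ) ∧ (∑ σ, π σ = 1) ∧
    ∀ τ, (∑ σ, π σ * kernel ξ i p σ τ) = π τ

/-- The mean jump `M^{(i)}_σ(p)` of the right edge from state `σ`
(Definition 2.4): `Σ_k Σ_τ (1 − 2k) P^{(i)}_{(σ,τ,k)}(p)`. -/
def meanJump [MeasureSpace Ω] (ξ : Ω → Env) (i : ℕ) (p : ℝ) (σ : IMCState i) : ℝ :=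
  ∑' k : ℕ, ∑ τ : IMCState i, (1 - 2 * (k : ℝ)) *
    (ℙ {ω | edge (i : ℕ∞) p (ξ ω) (ησ i σ) 1 = 1 - 2 * (k : ℤ) ∧
        Yproc i p (ξ ω) (ησ i σ) 1 = τ}).toReal

/-- The mean edge drift `M^{(i)}(p)` computed from a stationary measure `π`
(Definition 2.5). -/
def meanDrift [MeasureSpace Ω] (ξ : Ω → Env) (i : ℕ) (p : ℝ)
    (π : IMCState i → ℝ) : ℝ :=
  ∑ σ, meanJump ξ i p σ * π σ

/-- `a ∈ ℝ ∪ {±∞}` is the almost sure asymptotic speed of the right edge of the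
process of order `i ∈ ℕ ∪ {∞}` started from `1_{· ≤ 0}`. -/
def IsEdgeSpeed [MeasureSpace Ω] (ξ : Ω → Env) (i : ℕ∞) (p : ℝ) (a : EReal) : Prop :=
  ∀ᵐ ω ∂ℙ, Tendsto (fun n : ℕ => (((edge i p (ξ ω) η₀ n : ℤ) : ℝ) / n : EReal))
    atTop (nhds a)

/-- `pc i = p_c^{(i)}` is, for each `i ∈ ℕ`, a root in `(0,1]` of the mean edge
drift `M^{(i)}` (computed from a stationary measure of the induced chain). -/
def IsCriticalSeq [MeasureSpace Ω] (ξ : Ω → Env) (pc : ℕ → ℝ) : Prop :=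
  ∀ i, pc i ∈ Set.Ioc (0 : ℝ) 1 ∧
    ∃ π, IsStationaryDist ξ i (pc i) π ∧ meanDrift ξ i (pc i) π = 0

lemma forced_of_le {i : ℕ} {d : ℤ} (hd : d ≤ 2 * (i : ℤ)) :
    forced (i : ℕ∞) d = false := by
  unfold forced
  rw [decide_eq_false_iff_not]
  rintro ⟨-, hlt⟩
  have h1 : d.toNat ≤ 2 * i := by omega
  have h2 : (d.toNat : ℕ∞) ≤ 2 * (i : ℕ∞) := by
    calc (d.toNat : ℕ∞) ≤ ((2 * i : ℕ) : ℕ∞) := Nat.cast_le.mpr h1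
    _ = 2 * (i : ℕ∞) := by push_cast; ring
  exact absurd hlt (not_lt.mpr h2)

lemma nextEdge_le' (p : ℝ) (u : Env) (n : ℕ) (c : ℤ → Bool) (N : ℤ) (hN : 0 ≤ N + 1)
    (hc : ∀ m, c m = true → m ≤ N) : nextEdge p u n c ≤ N + 1 := by
  unfold nextEdge
  by_cases h : {x : ℤ | ∃ m j, c m = true ∧ bondOpen p u n m j = true ∧ x = m + dir j}.Nonempty
  · apply csSup_le h
    rintro x ⟨m, j, hm, -, rfl⟩
    have h1 := hc m hm
    have h2 : dir j ≤ 1 := by cases j <;> simp [dir]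
    omega
  · rw [Set.not_nonempty_iff_eq_empty] at h
    rw [h, Int.csSup_empty]
    exact hN

lemma X_le (i : ℕ∞) (p : ℝ) (u : Env) : ∀ n m, Xproc i p u η₀ n m = true → m ≤ n := by
  intro n
  induction n with
  | zero =>
    intro m hm
    simp only [Xproc, η₀, decide_eq_true_eq] at hm
    exact_mod_cast hm.1
  | succ n ih =>
    intro m hm
    have hedge : nextEdge p u n (Xproc i p u η₀ n) ≤ (n : ℤ) + 1 :=
      nextEdge_le' p u n _ n (by positivity) ih
    simp only [Xproc, Bool.or_eq_true, Bool.and_eq_true] at hm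
    rcases hm with (⟨h1, -⟩ | ⟨h1, -⟩) | h1
    · have := ih _ h1; push_cast; omega
    · have := ih _ h1; push_cast; omega
    · unfold forced at h1
      obtain ⟨-, hlt⟩ := @of_decide_eq_true _ (Classical.propDecidable _) h1
      have hne : (nextEdge p u n (Xproc i p u η₀ n) - m).toNat ≠ 0 := by
        intro h0
        rw [h0] at hlt
        exact absurd hlt (by simp)
      push_cast
      omega

lemma X_agree (i : ℕ) (p : ℝ) (u : Env) :
    ∀ (n : ℕ) (m : ℤ), (n : ℤ) - m ≤ 2 * i → Xproc ⊤ p u η₀ n m = Xproc (i : ℕ∞) p u η₀ n m := by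
  intro n
  induction n with
  | zero => intro m _; rfl
  | succ n ih =>
    intro m hm
    have hedge : nextEdge p u n (Xproc (i : ℕ∞) p u η₀ n) ≤ (n : ℤ) + 1 :=
      nextEdge_le' p u n _ n (by positivity) (X_le _ p u n)
    have hforcedi : forced (i : ℕ∞) (nextEdge p u n (Xproc (i : ℕ∞) p u η₀ n) - m) = false := by
      apply forced_of_le
      push_cast at hm ⊢
      omega
    have hforcedtop : ∀ d : ℤ, forced ⊤ d = false := by
      intro d
      unfold forced
      rw [decide_eq_false_iff_not]
      rintro ⟨-, hlt⟩
      have : (2 : ℕ∞) * ⊤ = ⊤ := by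
        rw [ENat.mul_top]; norm_num
      rw [this] at hlt
      exact absurd hlt (by simp)
    simp only [Xproc]
    rw [ih (m - 1) (by push_cast at hm ⊢; omega), ih (m + 1) (by push_cast at hm ⊢; omega),
      hforcedi, hforcedtop]

/-- For every `i ∈ ℕ`, every `p ∈ [0,1]`, every environment (sample point) `u`,
and every site `(n,m)` of the correct parity with `n − m ≤ 2i`, the oriented
percolation process and the `i`-th strengthened process agree at `(n,m)`;
moreover no such site is ever infected by force. -/
theorem agree_near_diagonal (u : Env) (hu : ∀ n m j, u n m j ∈ Set.Icc (0 : ℝ) 1)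
    (i : ℕ) (p : ℝ) (hp : p ∈ Set.Icc (0 : ℝ) 1) :
    (∀ (n : ℕ) (m : ℤ), Even ((n : ℤ) + m) → (n : ℤ) - m ≤ 2 * i →
      Xproc ⊤ p u η₀ n m = Xproc (i : ℕ∞) p u η₀ n m) ∧
    (∀ (n : ℕ) (m : ℤ), Even (((n : ℤ) + 1) + m) → ((n : ℤ) + 1) - m ≤ 2 * i →
      forced (i : ℕ∞) (nextEdge p u n (Xproc (i : ℕ∞) p u η₀ n) - m) = false) := by
  constructor
  · intro n m _ hnm
    exact X_agree i p u n m hnm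
  · intro n m _ hnm
    have hedge : nextEdge p u n (Xproc (i : ℕ∞) p u η₀ n) ≤ (n : ℤ) + 1 :=
      nextEdge_le' p u n _ n (by positivity) (X_le _ p u n)
    apply forced_of_le
    omega
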